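/- Let (I, ≼) be a finite partially ordered set, let P : I → ℝ be strictly positive, and let L' : I → I → ℝ satisfy L'_{ij} > 0 for all j ≼ i. Then the system of equations ∑_{j ≼ i} (x_i − L'_{ij}) · x_j · P_j = 0 (for all i ∈ I) has a unique solution x : I → ℝ with all x_i > 0. -/

import Mathlib

/-- The positive root of `a x^2 + b x + c = 0`. -/
noncomputable def quadRoot (a b c : ℝ) : ℝ :=
  (-b + Real.sqrt (b ^ 2 - 4 * a * c)) / (2 * a)

lemma quadRoot_spec (a b c : ℝ) (ha : 0 < a) (h : c < 0 ∨ (c = 0 ∧ b < 0)) :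
    0 < quadRoot a b c ∧ a * quadRoot a b c ^ 2 + b * quadRoot a b c + c = 0 := by
  have hD : 0 ≤ b ^ 2 - 4 * a * c := by
    rcases h with h | ⟨h, _⟩
    · nlinarith [sq_nonneg b]
    · nlinarith [sq_nonneg b]
  have hs : Real.sqrt (b ^ 2 - 4 * a * c) ^ 2 = b ^ 2 - 4 * a * c := Real.sq_sqrt hD
  have hpos : b < Real.sqrt (b ^ 2 - 4 * a * c) := by
    rcases h with h | ⟨h, hb⟩
    · have h1 : b ^ 2 < b ^ 2 - 4 * a * c := by nlinarith
      have h2 : |b| < Real.sqrt (b ^ 2 - 4 * a * c) := by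
        have := Real.sqrt_lt_sqrt (sq_nonneg b) h1
        rwa [Real.sqrt_sq_eq_abs] at this
      exact lt_of_le_of_lt (le_abs_self b) h2
    · have : Real.sqrt (b ^ 2 - 4 * a * c) = |b| := by
        rw [h]; simp [Real.sqrt_sq_eq_abs]
      rw [this, abs_of_neg hb]; linarith
  constructor
  · apply div_pos (by linarith) (by linarith)
  · unfold quadRoot
    generalize Real.sqrt (b ^ 2 - 4 * a * c) = s at hs ⊢
    field_simp
    nlinarith [hs]

lemma quad_unique (a b c x y : ℝ) (ha : 0 < a) (hc : c ≤ 0) (hx : 0 < x) (hy : 0 < y)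
    (ex : a * x ^ 2 + b * x + c = 0) (ey : a * y ^ 2 + b * y + c = 0) : x = y := by
  have key : (x - y) * (a * (x + y) + b) = 0 := by nlinarith
  have hne : a * (x + y) + b ≠ 0 := by
    have hpos : 0 < x * (a * (x + y) + b) := by nlinarith [mul_pos (mul_pos ha hx) hy]
    intro h; rw [h, mul_zero] at hpos; exact lt_irrefl 0 hpos
  rcases mul_eq_zero.mp key with h | h
  · linarith
  · exact absurd h hne

section WF
variable {I : Type*} [Fintype I] [PartialOrder I] [DecidableEq I]
  [DecidableRel ((· ≤ ·) : I → I → Prop)]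

local instance bicWF : WellFoundedRelation I := ⟨(· < ·), IsWellFounded.wf⟩

/-- The solution, defined by well-founded recursion over the poset. -/
noncomputable def bicSol (P : I → ℝ) (L' : I → I → ℝ) (i : I) : ℝ :=
  quadRoot (P i)
    ((∑ j ∈ (Finset.univ.filter (fun j => j ≤ i ∧ j ≠ i)).attach, bicSol P L' j.1 * P j.1)
      - L' i i * P i)
    (-(∑ j ∈ (Finset.univ.filter (fun j => j ≤ i ∧ j ≠ i)).attach, L' i j.1 * bicSol P L' j.1 * P j.1))
termination_by i
decreasing_by
  all_goals
    exact lt_of_le_of_ne (Finset.mem_filter.mp j.2).2.1 (Finset.mem_filter.mp j.2).2.2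

end WF

section

variable {I : Type*} [Fintype I] [PartialOrder I] [DecidableEq I]
  [DecidableRel ((· ≤ ·) : I → I → Prop)]

/-- The strict down-set of `i`. -/
def dset (i : I) : Finset I := Finset.univ.filter (fun j => j ≤ i ∧ j ≠ i)

lemma mem_dset {i j : I} : j ∈ dset i ↔ j < i := by
  simp [dset, lt_iff_le_and_ne]

lemma filter_le_eq (i : I) : Finset.univ.filter (· ≤ i) = insert i (dset i) := by
  ext j
  simp only [Finset.mem_filter, Finset.mem_univ, true_and, Finset.mem_insert, mem_dset]
  constructor
  · intro h; rcases eq_or_lt_of_le h with h | h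
    · exact Or.inl h
    · exact Or.inr h
  · rintro (rfl | h)
    · exact le_refl _
    · exact h.le

lemma not_mem_dset (i : I) : i ∉ dset i := by simp [mem_dset]

/-- The system equation at `i` rewritten as a quadratic in `x i`. -/
lemma eq_quad (P : I → ℝ) (L' : I → I → ℝ) (x : I → ℝ) (i : I) :
    ∑ j ∈ Finset.univ.filter (· ≤ i), (x i - L' i j) * x j * P j
      = P i * x i ^ 2 + ((∑ j ∈ dset i, x j * P j) - L' i i * P i) * x i
        + (-(∑ j ∈ dset i, L' i j * x j * P j)) := by
  rw [filter_le_eq, Finset.sum_insert (not_mem_dset i)]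
  have : ∑ j ∈ dset i, (x i - L' i j) * x j * P j
      = (∑ j ∈ dset i, x j * P j) * x i - ∑ j ∈ dset i, L' i j * x j * P j := by
    rw [Finset.sum_mul, ← Finset.sum_sub_distrib]
    exact Finset.sum_congr rfl fun j _ => by ring
  rw [this]; ring

lemma bicSol_def (P : I → ℝ) (L' : I → I → ℝ) (i : I) :
    bicSol P L' i = quadRoot (P i)
      ((∑ j ∈ dset i, bicSol P L' j * P j) - L' i i * P i)
      (-(∑ j ∈ dset i, L' i j * bicSol P L' j * P j)) := by
  rw [bicSol]
  congr 1
  · rw [← Finset.sum_attach (dset i) (fun j => bicSol P L' j * P j)]; rfl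
  · rw [← Finset.sum_attach (dset i) (fun j => L' i j * bicSol P L' j * P j)]; rfl

lemma bicSol_spec (P : I → ℝ) (hP : ∀ i, 0 < P i)
    (L' : I → I → ℝ) (hL' : ∀ i j, j ≤ i → 0 < L' i j) (i : I) :
    0 < bicSol P L' i ∧
      ∑ j ∈ Finset.univ.filter (· ≤ i), (bicSol P L' i - L' i j) * bicSol P L' j * P j = 0 := by
  induction i using WellFoundedLT.induction with
  | ind i ih =>
    have hxj : ∀ j ∈ dset i, 0 < bicSol P L' j := fun j hj => (ih j (mem_dset.mp hj)).1
    set S := ∑ j ∈ dset i, bicSol P L' j * P j with hS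
    set B := ∑ j ∈ dset i, L' i j * bicSol P L' j * P j with hB
    have hcond : -B < 0 ∨ (-B = 0 ∧ S - L' i i * P i < 0) := by
      rcases (dset i).eq_empty_or_nonempty with he | ⟨j, hj⟩
      · right
        constructor
        · simp [hB, he]
        · have : S = 0 := by simp [hS, he]
          rw [this]
          have := hL' i i le_rfl
          have := hP i
          nlinarith
      · left
        have : 0 < B := by
          apply Finset.sum_pos _ ⟨j, hj⟩
          intro k hk
          have hk' := mem_dset.mp hk
          exact mul_pos (mul_pos (hL' i k hk'.le) (hxj k hk)) (hP k)
        linarith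
    have hq := quadRoot_spec (P i) (S - L' i i * P i) (-B) (hP i) hcond
    rw [← bicSol_def] at hq
    refine ⟨hq.1, ?_⟩
    rw [eq_quad]
    exact hq.2

end

/-- The singular BIC equation system over a finite poset has a unique solution with all
coordinates positive. -/
theorem stmt_2 {I : Type*} [Fintype I] [PartialOrder I] [DecidableEq I]
    [DecidableRel ((· ≤ ·) : I → I → Prop)]
    (P : I → ℝ) (hP : ∀ i, 0 < P i)
    (L' : I → I → ℝ) (hL' : ∀ i j, j ≤ i → 0 < L' i j) :
    ∃! x : I → ℝ, (∀ i, 0 < x i) ∧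
      ∀ i, ∑ j ∈ Finset.univ.filter (· ≤ i), (x i - L' i j) * x j * P j = 0 := by
  refine ⟨bicSol P L', ⟨fun i => (bicSol_spec P hP L' hL' i).1,
    fun i => (bicSol_spec P hP L' hL' i).2⟩, ?_⟩
  rintro y ⟨hypos, hyeq⟩
  funext i
  induction i using WellFoundedLT.induction with
  | ind i ih =>
    have hagree : ∀ j ∈ dset i, y j = bicSol P L' j := fun j hj => ih j (mem_dset.mp hj)
    have hx := bicSol_spec P hP L' hL' i
    have hyq := hyeq i
    rw [eq_quad] at hyq
    have hxq := hx.2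
    rw [eq_quad] at hxq
    have hSeq : ∑ j ∈ dset i, y j * P j = ∑ j ∈ dset i, bicSol P L' j * P j :=
      Finset.sum_congr rfl fun j hj => by rw [hagree j hj]
    have hBeq : ∑ j ∈ dset i, L' i j * y j * P j = ∑ j ∈ dset i, L' i j * bicSol P L' j * P j :=
      Finset.sum_congr rfl fun j hj => by rw [hagree j hj]
    rw [hSeq, hBeq] at hyq
    have hBnn : 0 ≤ ∑ j ∈ dset i, L' i j * bicSol P L' j * P j := by
      apply Finset.sum_nonneg
      intro k hk
      have hk' := mem_dset.mp hk
      exact le_of_lt (mul_pos (mul_pos (hL' i k hk'.le)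
        ((bicSol_spec P hP L' hL' k).1)) (hP k))
    exact quad_unique (P i) _ _ (y i) (bicSol P L' i) (hP i) (by linarith)
      (hypos i) hx.1 hyq hxq
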